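/- arXiv:1004.2305 — 3 statements merged into one kernel-verified Lean document; each statement's English description precedes it below -/
import Mathlib

section
/- For every integer n ≥ 4, the sum ∑ C_{r_1}·C_{r_2}·C_{r_3}·C_{r_4} over all quadruples (r_1,r_2,r_3,r_4) of integers with each r_i ≥ 1 and r_1 + r_2 + r_3 + r_4 = n − 2 equals C_{n+1} − 6·C_n + 10·C_{n−1} − 4·C_{n−2}. -/
open Finset Finset.Nat

private lemma boundary_lemma (m : ℕ) (hm : 1 ≤ m) (φ : ℕ × ℕ → ℤ) :
    ∑ p ∈ (antidiagonal m).filter (fun p => 1 ≤ p.1 ∧ 1 ≤ p.2), φ p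
      = (∑ p ∈ antidiagonal m, φ p) - φ (0, m) - φ (m, 0) := by
  have h : (antidiagonal m).filter (fun p => ¬(1 ≤ p.1 ∧ 1 ≤ p.2)) = {(0, m), (m, 0)} := by
    ext ⟨a, b⟩
    simp only [mem_filter, Finset.HasAntidiagonal.mem_antidiagonal, mem_insert, mem_singleton, Prod.mk.injEq,
      not_and_or, not_le, Nat.lt_one_iff]
    omega
  have h2 := Finset.sum_filter_add_sum_filter_not (antidiagonal m)
    (fun p => 1 ≤ p.1 ∧ 1 ≤ p.2) φ
  rw [h, Finset.sum_insert (by simp; omega), Finset.sum_singleton] at h2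
  linarith

private lemma shiftL_lemma (m : ℕ) (φ : ℕ × ℕ → ℤ) :
    ∑ p ∈ antidiagonal m, φ (p.1 + 1, p.2)
      = ∑ p ∈ (antidiagonal (m + 1)).filter (fun p => 1 ≤ p.1), φ p := by
  refine Finset.sum_nbij' (i := fun p => (p.1 + 1, p.2)) (j := fun p => (p.1 - 1, p.2))
    ?_ ?_ ?_ ?_ ?_
  · intro p hp
    simp only [Finset.HasAntidiagonal.mem_antidiagonal] at hp
    simp only [mem_filter, Finset.HasAntidiagonal.mem_antidiagonal]
    omega
  · intro p hp
    simp only [mem_filter, Finset.HasAntidiagonal.mem_antidiagonal] at hp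
    simp only [Finset.HasAntidiagonal.mem_antidiagonal]
    omega
  · intro p hp
    simp
  · intro p hp
    simp only [mem_filter, Finset.HasAntidiagonal.mem_antidiagonal] at hp
    obtain ⟨a, b⟩ := p
    simp only [Prod.mk.injEq]
    exact ⟨by omega, trivial⟩
  · intro p hp
    rfl

private lemma shiftB_lemma (m : ℕ) (φ : ℕ × ℕ → ℤ) :
    ∑ p ∈ antidiagonal m, φ (p.1 + 1, p.2 + 1)
      = ∑ p ∈ (antidiagonal (m + 2)).filter (fun p => 1 ≤ p.1 ∧ 1 ≤ p.2), φ p := by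
  refine Finset.sum_nbij' (i := fun p => (p.1 + 1, p.2 + 1)) (j := fun p => (p.1 - 1, p.2 - 1))
    ?_ ?_ ?_ ?_ ?_
  · intro p hp
    simp only [Finset.HasAntidiagonal.mem_antidiagonal] at hp
    simp only [mem_filter, Finset.HasAntidiagonal.mem_antidiagonal]
    omega
  · intro p hp
    simp only [mem_filter, Finset.HasAntidiagonal.mem_antidiagonal] at hp
    simp only [Finset.HasAntidiagonal.mem_antidiagonal]
    omega
  · intro p hp
    simp
  · intro p hp
    simp only [mem_filter, Finset.HasAntidiagonal.mem_antidiagonal] at hp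
    obtain ⟨a, b⟩ := p
    simp only [Prod.mk.injEq]
    exact ⟨by omega, by omega⟩
  · intro p hp
    rfl

private lemma conv2 (m : ℕ) :
    ∑ p ∈ antidiagonal m, (catalan p.1 : ℤ) * catalan p.2 = catalan (m + 1) := by
  rw [catalan_succ']
  push_cast
  rfl

/-- g m : filtered pair convolution -/
private lemma g_eval (m : ℕ) (hm : 1 ≤ m) :
    ∑ p ∈ (antidiagonal m).filter (fun p => 1 ≤ p.1 ∧ 1 ≤ p.2),
        (catalan p.1 : ℤ) * catalan p.2
      = (catalan (m + 1) : ℤ) - 2 * catalan m := by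
  rw [boundary_lemma m hm, conv2]
  simp only [catalan_zero]
  push_cast
  ring

private lemma h_eval (m : ℕ) :
    ∑ p ∈ antidiagonal m, (catalan (p.1 + 1) : ℤ) * catalan p.2
      = (catalan (m + 2) : ℤ) - catalan (m + 1) := by
  rw [shiftL_lemma m (fun p => (catalan p.1 : ℤ) * catalan p.2)]
  have h : (antidiagonal (m + 1)).filter (fun p : ℕ × ℕ => ¬(1 ≤ p.1)) = {(0, m + 1)} := by
    ext ⟨a, b⟩
    simp only [mem_filter, Finset.HasAntidiagonal.mem_antidiagonal, mem_singleton, Prod.mk.injEq, not_le,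
      Nat.lt_one_iff]
    omega
  have h2 := Finset.sum_filter_add_sum_filter_not (antidiagonal (m + 1))
    (fun p : ℕ × ℕ => 1 ≤ p.1) (fun p => (catalan p.1 : ℤ) * catalan p.2)
  rw [h, Finset.sum_singleton, conv2] at h2
  simp only [catalan_zero] at h2
  push_cast at h2 ⊢
  linarith


private lemma shiftR_lemma (m : ℕ) (φ : ℕ × ℕ → ℤ) :
    ∑ p ∈ antidiagonal m, φ (p.1, p.2 + 1)
      = ∑ p ∈ (antidiagonal (m + 1)).filter (fun p => 1 ≤ p.2), φ p := by
  refine Finset.sum_nbij' (i := fun p => (p.1, p.2 + 1)) (j := fun p => (p.1, p.2 - 1))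
    ?_ ?_ ?_ ?_ ?_
  · intro p hp
    simp only [Finset.HasAntidiagonal.mem_antidiagonal] at hp
    simp only [mem_filter, Finset.HasAntidiagonal.mem_antidiagonal]
    omega
  · intro p hp
    simp only [mem_filter, Finset.HasAntidiagonal.mem_antidiagonal] at hp
    simp only [Finset.HasAntidiagonal.mem_antidiagonal]
    omega
  · intro p hp
    simp
  · intro p hp
    simp only [mem_filter, Finset.HasAntidiagonal.mem_antidiagonal] at hp
    obtain ⟨a, b⟩ := p
    simp only [Prod.mk.injEq]
    exact ⟨trivial, by omega⟩
  · intro p hp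
    rfl

private lemma h_eval' (m : ℕ) :
    ∑ p ∈ antidiagonal m, (catalan p.1 : ℤ) * catalan (p.2 + 1)
      = (catalan (m + 2) : ℤ) - catalan (m + 1) := by
  rw [shiftR_lemma m (fun p => (catalan p.1 : ℤ) * catalan p.2)]
  have h : (antidiagonal (m + 1)).filter (fun p : ℕ × ℕ => ¬(1 ≤ p.2)) = {(m + 1, 0)} := by
    ext ⟨a, b⟩
    simp only [mem_filter, Finset.HasAntidiagonal.mem_antidiagonal, mem_singleton, Prod.mk.injEq, not_le,
      Nat.lt_one_iff]
    omega
  have h2 := Finset.sum_filter_add_sum_filter_not (antidiagonal (m + 1))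
    (fun p : ℕ × ℕ => 1 ≤ p.2) (fun p => (catalan p.1 : ℤ) * catalan p.2)
  rw [h, Finset.sum_singleton, conv2] at h2
  simp only [catalan_zero] at h2
  push_cast at h2 ⊢
  linarith

private lemma shift11_eval (m : ℕ) :
    ∑ p ∈ antidiagonal m, (catalan (p.1 + 1) : ℤ) * catalan (p.2 + 1)
      = (catalan (m + 3) : ℤ) - 2 * catalan (m + 2) := by
  rw [shiftB_lemma m (fun p => (catalan p.1 : ℤ) * catalan p.2)]
  rw [g_eval (m + 2) (by omega)]

-- splitting the 4-tuple sum
private lemma split4 (m : ℕ) (φ : ℕ → ℕ → ℕ → ℕ → ℤ) :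
    ∑ r ∈ antidiagonalTuple 4 m, φ (r 0) (r 1) (r 2) (r 3)
      = ∑ p ∈ antidiagonal m, ∑ q ∈ antidiagonal p.1 ×ˢ antidiagonal p.2,
          φ q.1.1 q.1.2 q.2.1 q.2.2 := by
  rw [Finset.sum_sigma']
  refine Finset.sum_nbij'
    (i := fun r => ⟨(r 0 + r 1, r 2 + r 3), ((r 0, r 1), (r 2, r 3))⟩)
    (j := fun s => ![s.2.1.1, s.2.1.2, s.2.2.1, s.2.2.2]) ?_ ?_ ?_ ?_ ?_
  · intro r hr
    rw [Finset.Nat.mem_antidiagonalTuple, Fin.sum_univ_four] at hr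
    simp only [Finset.mem_sigma, Finset.HasAntidiagonal.mem_antidiagonal, Finset.mem_product]
    refine ⟨by rw [← hr]; ring, trivial, trivial⟩
  · intro s hs
    simp only [Finset.mem_sigma, Finset.HasAntidiagonal.mem_antidiagonal, Finset.mem_product] at hs
    rw [Finset.Nat.mem_antidiagonalTuple, Fin.sum_univ_four]
    simp only [Matrix.cons_val_zero, Matrix.cons_val_one, Matrix.head_cons,
      Matrix.cons_val_two, Matrix.tail_cons, Matrix.cons_val_three]
    omega
  · intro r hr
    funext i
    fin_cases i <;> simp
  · intro s hs
    obtain ⟨⟨a, b⟩, ⟨⟨i, j⟩, ⟨k, l⟩⟩⟩ := s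
    simp only [Finset.mem_sigma, Finset.HasAntidiagonal.mem_antidiagonal, Finset.mem_product] at hs
    simp only [Matrix.cons_val_zero, Matrix.cons_val_one, Matrix.head_cons,
      Matrix.cons_val_two, Matrix.tail_cons, Matrix.cons_val_three, Sigma.mk.inj_iff,
      Prod.mk.injEq, heq_eq_eq]
    refine ⟨⟨?_, ?_⟩, trivial⟩ <;> omega
  · intro r hr
    rfl


private def psi (a : ℕ) : ℤ := if 1 ≤ a then (catalan a : ℤ) else 0

private lemma psi_pos {a : ℕ} (ha : 1 ≤ a) : psi a = (catalan a : ℤ) := if_pos ha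

private def G (a : ℕ) : ℤ := ∑ p ∈ antidiagonal a, psi p.1 * psi p.2

private lemma G_eq_filter (a : ℕ) :
    G a = ∑ p ∈ (antidiagonal a).filter (fun p => 1 ≤ p.1 ∧ 1 ≤ p.2),
        (catalan p.1 : ℤ) * catalan p.2 := by
  rw [Finset.sum_filter]
  refine Finset.sum_congr rfl fun p hp => ?_
  by_cases h1 : 1 ≤ p.1 <;> by_cases h2 : 1 ≤ p.2 <;> simp [psi, h1, h2]

private lemma G_eval {a : ℕ} (ha : 1 ≤ a) :
    G a = (catalan (a + 1) : ℤ) - 2 * catalan a := by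
  rw [G_eq_filter, g_eval a ha]

private lemma G_zero : G 0 = 0 := by
  simp [G, psi]

/-- For every n ≥ 4, ∑_{r₁+r₂+r₃+r₄=n−2, rᵢ≥1} C_{r₁}C_{r₂}C_{r₃}C_{r₄}
= C_{n+1} − 6·C_n + 10·C_{n−1} − 4·C_{n−2}. -/
theorem stmt_6 (n : ℕ) (hn : 4 ≤ n) :
    (∑ r ∈ (Finset.Nat.antidiagonalTuple 4 (n - 2)).filter (fun r => ∀ i, 1 ≤ r i),
        ∏ i, (catalan (r i) : ℤ)) =
      (catalan (n + 1) : ℤ) - 6 * catalan n + 10 * catalan (n - 1) - 4 * catalan (n - 2) := by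
  obtain ⟨k, rfl⟩ : ∃ k, n = k + 4 := ⟨n - 4, by omega⟩
  have e2 : k + 4 - 2 = k + 2 := rfl
  have e1 : k + 4 - 1 = k + 3 := rfl
  rw [e2, e1]
  -- Step 1: replace filtered sum by psi-product sum
  have step1 : (∑ r ∈ (antidiagonalTuple 4 (k + 2)).filter (fun r => ∀ i, 1 ≤ r i),
      ∏ i, (catalan (r i) : ℤ))
      = ∑ r ∈ antidiagonalTuple 4 (k + 2), psi (r 0) * psi (r 1) * psi (r 2) * psi (r 3) := by
    rw [Finset.sum_filter]
    refine Finset.sum_congr rfl fun r hr => ?_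
    by_cases h : ∀ i, 1 ≤ r i
    · rw [if_pos h, Fin.prod_univ_four, psi_pos (h 0), psi_pos (h 1), psi_pos (h 2),
        psi_pos (h 3)]
      try ring
    · rw [if_neg h]
      push_neg at h
      obtain ⟨i, hi⟩ := h
      have hz : r i = 0 := by omega
      have hpz : psi (r i) = 0 := by rw [hz]; simp [psi]
      obtain ⟨iv, hlt⟩ := i
      interval_cases iv
      · rw [show psi (r 0) = 0 from hpz]; ring
      · rw [show psi (r 1) = 0 from hpz]; ring
      · rw [show psi (r 2) = 0 from hpz]; ring
      · rw [show psi (r 3) = 0 from hpz]; ring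
  rw [step1, split4 (k + 2) (fun a b c d => psi a * psi b * psi c * psi d)]
  -- Step 2: inner double sum factorizes
  have step2 : ∀ p ∈ antidiagonal (k + 2),
      (∑ q ∈ antidiagonal p.1 ×ˢ antidiagonal p.2,
        psi q.1.1 * psi q.1.2 * psi q.2.1 * psi q.2.2) = G p.1 * G p.2 := by
    intro p hp
    rw [Finset.sum_product, G, G, Finset.sum_mul_sum]
    refine Finset.sum_congr rfl fun a ha => Finset.sum_congr rfl fun b hb => ?_
    ring
  rw [show (∑ p ∈ antidiagonal (k + 2), ∑ q ∈ antidiagonal p.1 ×ˢ antidiagonal p.2,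
      psi q.1.1 * psi q.1.2 * psi q.2.1 * psi q.2.2)
      = ∑ p ∈ antidiagonal (k + 2), G p.1 * G p.2 from Finset.sum_congr rfl step2]
  -- Step 3: reduce to filtered sum since G 0 = 0
  have hb := boundary_lemma (k + 2) (Nat.le_add_left 1 (k + 1)) (fun p => G p.1 * G p.2)
  simp only [G_zero, zero_mul, mul_zero, sub_zero] at hb
  rw [← hb]
  -- Step 4: expand on the filtered set
  have step4 : ∀ p ∈ (antidiagonal (k + 2)).filter (fun p : ℕ × ℕ => 1 ≤ p.1 ∧ 1 ≤ p.2),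
      G p.1 * G p.2
        = ((catalan (p.1 + 1) : ℤ) * catalan (p.2 + 1))
          - 2 * ((catalan (p.1 + 1) : ℤ) * catalan p.2)
          - 2 * ((catalan p.1 : ℤ) * catalan (p.2 + 1))
          + 4 * ((catalan p.1 : ℤ) * catalan p.2) := by
    intro p hp
    simp only [Finset.mem_filter] at hp
    rw [G_eval hp.2.1, G_eval hp.2.2]
    ring
  rw [Finset.sum_congr rfl step4]
  simp only [Finset.sum_add_distrib, Finset.sum_sub_distrib, ← Finset.mul_sum]
  -- Step 5: evaluate the four filtered sums
  have F1 : ∑ p ∈ (antidiagonal (k + 2)).filter (fun p : ℕ × ℕ => 1 ≤ p.1 ∧ 1 ≤ p.2),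
      (catalan (p.1 + 1) : ℤ) * catalan (p.2 + 1)
      = (catalan (k + 5) : ℤ) - 2 * catalan (k + 4) - 2 * catalan (k + 3) := by
    rw [boundary_lemma (k + 2) (Nat.le_add_left 1 (k + 1)) (fun p => (catalan (p.1 + 1) : ℤ) * catalan (p.2 + 1))]
    rw [shift11_eval (k + 2)]
    norm_num [catalan_one]
    ring
  have F2 : ∑ p ∈ (antidiagonal (k + 2)).filter (fun p : ℕ × ℕ => 1 ≤ p.1 ∧ 1 ≤ p.2),
      (catalan (p.1 + 1) : ℤ) * catalan p.2
      = (catalan (k + 4) : ℤ) - 2 * catalan (k + 3) - catalan (k + 2) := by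
    rw [boundary_lemma (k + 2) (Nat.le_add_left 1 (k + 1)) (fun p => (catalan (p.1 + 1) : ℤ) * catalan p.2)]
    rw [h_eval (k + 2)]
    norm_num [catalan_one]
    ring
  have F3 : ∑ p ∈ (antidiagonal (k + 2)).filter (fun p : ℕ × ℕ => 1 ≤ p.1 ∧ 1 ≤ p.2),
      (catalan p.1 : ℤ) * catalan (p.2 + 1)
      = (catalan (k + 4) : ℤ) - 2 * catalan (k + 3) - catalan (k + 2) := by
    rw [boundary_lemma (k + 2) (Nat.le_add_left 1 (k + 1)) (fun p => (catalan p.1 : ℤ) * catalan (p.2 + 1))]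
    rw [h_eval' (k + 2)]
    norm_num [catalan_one]
    ring
  have F4 : ∑ p ∈ (antidiagonal (k + 2)).filter (fun p : ℕ × ℕ => 1 ≤ p.1 ∧ 1 ≤ p.2),
      (catalan p.1 : ℤ) * catalan p.2
      = (catalan (k + 3) : ℤ) - 2 * catalan (k + 2) := by
    exact g_eval (k + 2) (Nat.le_add_left 1 (k + 1))
  rw [F1, F2, F3, F4]
  have : k + 4 + 1 = k + 5 := rfl
  rw [this]
  ring
end

section
/- For every m ≥ 2, setting ⌊m⌋ := ⌊(m−1)/2⌋ + 2, there exist positive integers a_1, a_2, …, a_{⌊m⌋} (depending on m but not on n) such that for all integers n ≥ m, T(n,m) = ∑_{l=1}^{⌊m⌋} (−1)^{l−1}·a_l·C_{n+2−l}. -/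
open Finset Finset.Nat

/-- Full Catalan convolution: sum of `∏ catalan (r i)` over all `k`-tuples summing to `N`. -/
def Dcat (N k : ℕ) : ℕ := ∑ r ∈ antidiagonalTuple k N, ∏ i, catalan (r i)

lemma sum_adT_succ {M : Type*} [AddCommMonoid M] (k N : ℕ) (f : (Fin (k+1) → ℕ) → M) :
    ∑ r ∈ antidiagonalTuple (k+1) N, f r
      = ∑ p ∈ antidiagonal N, ∑ x ∈ antidiagonalTuple k p.2, f (Fin.cons p.1 x) := by
  conv_rhs => rw [Finset.sum_sigma']
  refine Finset.sum_nbij' (fun r => ⟨(r 0, ∑ i, Fin.tail r i), Fin.tail r⟩)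
    (fun q => Fin.cons q.1.1 q.2) ?_ ?_ ?_ ?_ ?_
  · intro r hr
    rw [mem_antidiagonalTuple] at hr
    simp only [Finset.mem_sigma, Finset.HasAntidiagonal.mem_antidiagonal, mem_antidiagonalTuple]
    refine ⟨?_, trivial⟩
    rw [← hr, Fin.sum_univ_succ]; rfl
  · intro q hq
    simp only [Finset.mem_sigma, Finset.HasAntidiagonal.mem_antidiagonal, mem_antidiagonalTuple] at hq
    rw [mem_antidiagonalTuple, Fin.sum_cons, hq.2, hq.1]
  · intro r _; exact Fin.cons_self_tail r
  · intro q hq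
    simp only [Finset.mem_sigma, Finset.HasAntidiagonal.mem_antidiagonal, mem_antidiagonalTuple] at hq
    refine Sigma.ext ?_ (heq_of_eq ?_)
    · simp [Prod.ext_iff, hq.2]
    · simp
  · intro r _; rw [Fin.cons_self_tail]

lemma Dcat_succ (N k : ℕ) :
    Dcat N (k+1) = ∑ p ∈ antidiagonal N, catalan p.1 * Dcat p.2 k := by
  rw [Dcat, sum_adT_succ]
  refine Finset.sum_congr rfl fun p _ => ?_
  rw [Dcat, Finset.mul_sum]
  refine Finset.sum_congr rfl fun x _ => ?_
  rw [Fin.prod_univ_succ]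
  simp [Fin.cons_succ]

lemma Dcat_succ' (N k : ℕ) :
    Dcat N (k+1) = ∑ i ∈ range (N+1), catalan i * Dcat (N - i) k := by
  rw [Dcat_succ, Finset.Nat.sum_antidiagonal_eq_sum_range_succ_mk]

lemma Dcat_one (N : ℕ) : Dcat N 1 = catalan N := by
  simp [Dcat, antidiagonalTuple_one]

lemma Dcat_two (N : ℕ) : Dcat N 2 = catalan (N+1) := by
  rw [Dcat_succ, catalan_succ']
  exact Finset.sum_congr rfl fun p _ => by rw [Dcat_one]

lemma swap_help {M : Type*} [AddCommMonoid M] (N : ℕ) (f : ℕ → ℕ → M) :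
    ∑ i ∈ range (N+1), ∑ j ∈ range (i+1), f j (i - j)
      = ∑ u ∈ range (N+1), ∑ v ∈ range (N - u + 1), f u v := by
  rw [Finset.sum_sigma', Finset.sum_sigma']
  refine Finset.sum_nbij' (fun q => ⟨q.2, q.1 - q.2⟩) (fun q => ⟨q.1 + q.2, q.1⟩)
    ?_ ?_ ?_ ?_ ?_ <;>
    simp only [Finset.mem_sigma, Finset.mem_range] <;> intro q hq
  · omega
  · omega
  · refine Sigma.ext ?_ (heq_of_eq ?_) <;> simp <;> omega
  · refine Sigma.ext ?_ (heq_of_eq ?_) <;> simp <;> omega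
  · simp

lemma catalan_succ_range (i : ℕ) :
    catalan (i+1) = ∑ j ∈ range (i+1), catalan j * catalan (i - j) := by
  rw [catalan_succ', Finset.Nat.sum_antidiagonal_eq_sum_range_succ_mk]

lemma Dcat_rec (N k : ℕ) : Dcat (N+1) (k+1) = Dcat (N+1) k + Dcat N (k+2) := by
  rw [Dcat_succ' (N+1) k, Finset.sum_range_succ']
  simp only [catalan_zero, one_mul, Nat.sub_zero, Nat.succ_sub_succ]
  rw [add_comm]
  congr 1
  have h1 : ∀ i ∈ range (N+1), catalan (i+1) * Dcat (N-i) k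
      = ∑ j ∈ range (i+1), catalan j * (catalan (i-j) * Dcat (N - j - (i - j)) k) := by
    intro i hi
    rw [catalan_succ_range, Finset.sum_mul]
    refine Finset.sum_congr rfl fun j hj => ?_
    simp only [Finset.mem_range] at hj
    have h2 : N - i = N - j - (i - j) := by omega
    rw [h2, mul_assoc]
  rw [Finset.sum_congr rfl h1,
    swap_help N (fun u v => catalan u * (catalan v * Dcat (N - u - v) k)),
    Dcat_succ' N (k+1)]
  refine Finset.sum_congr rfl fun u hu => ?_
  rw [Dcat_succ' (N-u) k, Finset.mul_sum]

lemma pascal_aux (k l : ℕ) (hl : l ≤ k + 2) :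
    (k+2-l).choose (l+1) = (k+1-l).choose (l+1) + (k+1-l).choose l := by
  rcases Nat.lt_or_ge l (k+2) with h | h
  · have h1 : k+2-l = (k+1-l)+1 := by omega
    rw [h1, Nat.choose_succ_succ']; omega
  · have h1 : l = k+2 := le_antisymm hl h
    subst h1
    simp [Nat.choose_eq_zero_of_lt]

lemma Dcat_closed (k : ℕ) : ∀ N, (Dcat N (k+2) : ℤ)
    = ∑ l ∈ range (k+2), (-1:ℤ)^l * ((k+1-l).choose l : ℤ) * (catalan (N+k+1-l) : ℤ) := by
  induction k using Nat.twoStepInduction with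
  | zero =>
    intro N
    rw [Dcat_two]
    simp [Finset.sum_range_succ]
  | one =>
    intro N
    have h := Dcat_rec N 1
    rw [Dcat_two, Dcat_one] at h
    norm_num at h ⊢
    rw [Finset.sum_range_succ, Finset.sum_range_succ, Finset.sum_range_succ]
    norm_num [show N+1+1 = N+2 from rfl, show N+1+1-1 = N+1 from rfl]
    rw [show N+1+1 = N+2 from rfl] at h
    zify at h
    omega
  | more k IH1 IH2 =>
    intro N
    have hA : (Dcat (N+1) (k+1+2) : ℤ)
        = ∑ l ∈ range (k+3), (-1:ℤ)^l * ((k+2-l).choose l : ℤ) * (catalan (N+k+3-l) : ℤ) := by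
      rw [IH2 (N+1)]
      refine Finset.sum_congr rfl fun l hl => ?_
      simp only [Finset.mem_range] at hl
      have h1 : k+1+1-l = k+2-l := by omega
      have h2 : N+1+(k+1)+1-l = N+k+3-l := by omega
      rw [h1, h2]
    have hB : (Dcat (N+1) (k+2) : ℤ)
        = ∑ l ∈ range (k+2), (-1:ℤ)^l * ((k+1-l).choose l : ℤ) * (catalan (N+k+2-l) : ℤ) := by
      rw [IH1 (N+1)]
      refine Finset.sum_congr rfl fun l hl => ?_
      simp only [Finset.mem_range] at hl
      have h2 : N+1+k+1-l = N+k+2-l := by omega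
      rw [h2]
    have hrec : (Dcat N (k+2+2) : ℤ) = (Dcat (N+1) (k+1+2) : ℤ) - (Dcat (N+1) (k+2) : ℤ) := by
      have h9 := Dcat_rec N (k+2)
      rw [show k+2+1 = k+1+2 from by omega] at h9
      zify at h9
      omega
    rw [hrec, hA, hB]
    have e1 : ∑ l ∈ range (k+2+2), (-1:ℤ)^l * ((k+2+1-l).choose l : ℤ) * (catalan (N+(k+2)+1-l) : ℤ)
        = (∑ l ∈ range (k+3), (-1:ℤ)^(l+1) * ((k+2-l).choose (l+1) : ℤ) * (catalan (N+k+2-l) : ℤ))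
          + (catalan (N+k+3) : ℤ) := by
      rw [Finset.sum_range_succ']
      congr 1
      · refine Finset.sum_congr rfl fun l hl => ?_
        have h1 : k+2+1-(l+1) = k+2-l := by omega
        have h2 : N+(k+2)+1-(l+1) = N+k+2-l := by omega
        rw [h1, h2]
      · have h3 : N+(k+2)+1-0 = N+k+3 := by omega
        rw [h3]; simp
    have e2 : ∑ l ∈ range (k+3), (-1:ℤ)^l * ((k+2-l).choose l : ℤ) * (catalan (N+k+3-l) : ℤ)
        = (∑ l ∈ range (k+2), (-1:ℤ)^(l+1) * ((k+1-l).choose (l+1) : ℤ) * (catalan (N+k+2-l) : ℤ))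
          + (catalan (N+k+3) : ℤ) := by
      rw [Finset.sum_range_succ']
      congr 1
      · refine Finset.sum_congr rfl fun l hl => ?_
        have h1 : k+2-(l+1) = k+1-l := by omega
        have h2 : N+k+3-(l+1) = N+k+2-l := by omega
        rw [h1, h2]
      · simp
    rw [e1, e2]
    have e3 : ∑ l ∈ range (k+3), (-1:ℤ)^(l+1) * ((k+2-l).choose (l+1) : ℤ) * (catalan (N+k+2-l) : ℤ)
        = (∑ l ∈ range (k+3), (-1:ℤ)^(l+1) * ((k+1-l).choose (l+1) : ℤ) * (catalan (N+k+2-l) : ℤ))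
          + (∑ l ∈ range (k+3), (-1:ℤ)^(l+1) * ((k+1-l).choose l : ℤ) * (catalan (N+k+2-l) : ℤ)) := by
      rw [← Finset.sum_add_distrib]
      refine Finset.sum_congr rfl fun l hl => ?_
      simp only [Finset.mem_range] at hl
      rw [pascal_aux k l (by omega)]
      push_cast
      ring
    rw [e3]
    have e4 : ∑ l ∈ range (k+3), (-1:ℤ)^(l+1) * ((k+1-l).choose (l+1) : ℤ) * (catalan (N+k+2-l) : ℤ)
        = ∑ l ∈ range (k+2), (-1:ℤ)^(l+1) * ((k+1-l).choose (l+1) : ℤ) * (catalan (N+k+2-l) : ℤ) := by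
      rw [Finset.sum_range_succ]
      simp [Nat.choose_eq_zero_of_lt]
    have e5 : ∑ l ∈ range (k+3), (-1:ℤ)^(l+1) * ((k+1-l).choose l : ℤ) * (catalan (N+k+2-l) : ℤ)
        = -∑ l ∈ range (k+2), (-1:ℤ)^l * ((k+1-l).choose l : ℤ) * (catalan (N+k+2-l) : ℤ) := by
      rw [Finset.sum_range_succ]
      have hz : ((k+1-(k+2)).choose (k+2) : ℤ) = 0 := by
        rw [show k+1-(k+2) = 0 from by omega]
        simp [Nat.choose_eq_zero_of_lt]
      rw [hz]
      simp only [mul_zero, zero_mul, add_zero]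
      rw [← Finset.sum_neg_distrib]
      exact Finset.sum_congr rfl fun l hl => by ring
    rw [e4, e5]
    ring

lemma sum_filter_rev (k S : ℕ) (p : (Fin k → ℕ) → Prop) [DecidablePred p] :
    ∑ r ∈ (antidiagonalTuple k S).filter (fun r => p (r ∘ Fin.rev)), ∏ i, catalan (r i)
      = ∑ r ∈ (antidiagonalTuple k S).filter p, ∏ i, catalan (r i) := by
  have hsum : ∀ r : Fin k → ℕ, ∑ i, r (Fin.rev i) = ∑ i, r i := fun r =>
    Fintype.sum_equiv Fin.revPerm _ _ (fun i => rfl)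
  have hinv : ∀ r : Fin k → ℕ, (r ∘ Fin.rev) ∘ Fin.rev = r := fun r =>
    funext fun i => by simp [Function.comp, Fin.rev_rev]
  refine Finset.sum_nbij' (fun r => r ∘ Fin.rev) (fun r => r ∘ Fin.rev) ?_ ?_ ?_ ?_ ?_
  · intro r hr
    simp only [Finset.mem_filter, mem_antidiagonalTuple] at hr ⊢
    exact ⟨by rw [← hr.1]; exact hsum r, hr.2⟩
  · intro r hr
    simp only [Finset.mem_filter, mem_antidiagonalTuple] at hr ⊢
    exact ⟨by rw [← hr.1]; exact hsum r, by rw [hinv r]; exact hr.2⟩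
  · intro r _; exact hinv r
  · intro r _; exact hinv r
  · intro r hr
    exact (Fintype.prod_equiv Fin.revPerm _ _ (fun i => rfl)).symm

lemma sum_filter_zero_cons (k S : ℕ) (p : (Fin k → ℕ) → Prop) [DecidablePred p] :
    ∑ r ∈ (antidiagonalTuple (k+1) S).filter (fun r => r 0 = 0 ∧ p (Fin.tail r)),
      ∏ i, catalan (r i)
      = ∑ x ∈ (antidiagonalTuple k S).filter p, ∏ i, catalan (x i) := by
  refine Finset.sum_nbij' Fin.tail (fun x => Fin.cons (0:ℕ) x) ?_ ?_ ?_ ?_ ?_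
  · intro r hr
    simp only [Finset.mem_filter, mem_antidiagonalTuple] at hr ⊢
    refine ⟨?_, hr.2.2⟩
    have := hr.1
    rw [Fin.sum_univ_succ, hr.2.1, zero_add] at this
    exact this
  · intro x hx
    simp only [Finset.mem_filter, mem_antidiagonalTuple] at hx ⊢
    refine ⟨by rw [Fin.sum_cons, zero_add]; exact hx.1, Fin.cons_zero _ _, ?_⟩
    rw [Fin.tail_cons]; exact hx.2
  · intro r hr
    simp only [Finset.mem_filter] at hr
    rw [← hr.2.1]
    exact Fin.cons_self_tail r
  · intro x _; exact Fin.tail_cons _ _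
  · intro r hr
    simp only [Finset.mem_filter] at hr
    rw [Fin.prod_univ_succ, hr.2.1, catalan_zero, one_mul]
    rfl

lemma sum_filter_first (k S : ℕ) :
    ∑ r ∈ (antidiagonalTuple (k+1) S).filter (fun r => r 0 = 0), ∏ i, catalan (r i)
      = Dcat S k := by
  have h := sum_filter_zero_cons k S (fun _ => True)
  simp only [and_true, Finset.filter_true] at h
  rw [h, Dcat]

lemma sum_filter_last (k S : ℕ) :
    ∑ r ∈ (antidiagonalTuple (k+1) S).filter (fun r => r (Fin.last k) = 0), ∏ i, catalan (r i)
      = Dcat S k := by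
  rw [← sum_filter_first k S, ← sum_filter_rev (k+1) S (fun r => r 0 = 0)]
  refine Finset.sum_congr ?_ fun _ _ => rfl
  refine Finset.filter_congr fun r _ => ?_
  simp [Function.comp, Fin.rev_zero]

lemma sum_filter_both (k S : ℕ) :
    ∑ r ∈ (antidiagonalTuple (k+2) S).filter
        (fun r => r 0 = 0 ∧ r (Fin.last (k+1)) = 0), ∏ i, catalan (r i)
      = Dcat S k := by
  have h := sum_filter_zero_cons (k+1) S (fun x => x (Fin.last k) = 0)
  rw [← sum_filter_last k S, ← h]
  refine Finset.sum_congr ?_ fun _ _ => rfl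
  refine Finset.filter_congr fun r _ => ?_
  have : Fin.tail r (Fin.last k) = r (Fin.last (k+1)) := by
    rw [show Fin.tail r (Fin.last k) = r (Fin.last k).succ from rfl, Fin.succ_last]
  simp [this]

lemma filter_and_split {α : Type*} (t : Finset α) (p q : α → Prop)
    [DecidablePred p] [DecidablePred q] (f : α → ℕ) :
    ∑ r ∈ t.filter (fun r => p r ∧ q r), f r + ∑ r ∈ t.filter (fun r => p r ∧ ¬ q r), f r
      = ∑ r ∈ t.filter p, f r := by
  rw [← Finset.filter_filter p q, ← Finset.filter_filter p (fun r => ¬ q r)]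
  exact Finset.sum_filter_add_sum_filter_not _ _ _

/-- `T n m` = ∑ C_{r₁}⋯C_{r_m} over m-tuples of nonnegative integers with r₁ ≥ 1, r_m ≥ 1
and r₁+⋯+r_m = n−m+2. -/
def Tcount (n m : ℕ) : ℕ :=
  ∑ r ∈ (Finset.Nat.antidiagonalTuple m (n - m + 2)).filter
      (fun r => ∀ i : Fin m, ((i : ℕ) = 0 ∨ (i : ℕ) = m - 1) → 1 ≤ r i),
    ∏ i, catalan (r i)

lemma Tcount_eq (n j : ℕ) :
    (Tcount n (j+2) : ℤ)
      = (Dcat (n - (j+2) + 2) (j+2) : ℤ) - 2 * (Dcat (n - (j+2) + 2) (j+1) : ℤ)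
        + (Dcat (n - (j+2) + 2) j : ℤ) := by
  set S := n - (j+2) + 2 with hS
  set f : (Fin (j+2) → ℕ) → ℕ := fun r => ∏ i, catalan (r i) with hf
  set s := antidiagonalTuple (j+2) S with hs
  have hT : Tcount n (j+2)
      = ∑ r ∈ s.filter (fun r => ¬ (r 0 = 0) ∧ ¬ (r (Fin.last (j+1)) = 0)), f r := by
    rw [Tcount]
    refine Finset.sum_congr ?_ fun _ _ => rfl
    refine Finset.filter_congr fun r _ => ?_
    constructor
    · intro h
      refine ⟨?_, ?_⟩
      · have := h 0 (Or.inl rfl)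
        omega
      · have := h (Fin.last (j+1)) (Or.inr (by simp [Fin.val_last]))
        omega
    · rintro ⟨h0, h1⟩ i hi
      rcases hi with hi | hi
      · have hi0 : i = 0 := by
          apply Fin.ext; simpa using hi
        rw [hi0]; omega
      · have hil : i = Fin.last (j+1) := by
          apply Fin.ext; simp [Fin.val_last]; omega
        rw [hil]; omega
  have E1 := filter_and_split s (fun r => ¬ (r 0 = 0)) (fun r => r (Fin.last (j+1)) = 0) f
  have E3 := Finset.sum_filter_add_sum_filter_not s (fun r => r 0 = 0) f
  have E4 := filter_and_split s (fun r => r (Fin.last (j+1)) = 0) (fun r => r 0 = 0) f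
  have hcomm1 : ∑ r ∈ s.filter (fun r => r (Fin.last (j+1)) = 0 ∧ r 0 = 0), f r
      = ∑ r ∈ s.filter (fun r => r 0 = 0 ∧ r (Fin.last (j+1)) = 0), f r := by
    refine Finset.sum_congr ?_ fun _ _ => rfl
    exact Finset.filter_congr fun r _ => and_comm
  have hcomm2 : ∑ r ∈ s.filter (fun r => r (Fin.last (j+1)) = 0 ∧ ¬ (r 0 = 0)), f r
      = ∑ r ∈ s.filter (fun r => ¬ (r 0 = 0) ∧ r (Fin.last (j+1)) = 0), f r := by
    refine Finset.sum_congr ?_ fun _ _ => rfl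
    exact Finset.filter_congr fun r _ => and_comm
  have hall : ∑ r ∈ s, f r = Dcat S (j+2) := rfl
  have hP : ∑ r ∈ s.filter (fun r => r 0 = 0), f r = Dcat S (j+1) :=
    sum_filter_first (j+1) S
  have hQ : ∑ r ∈ s.filter (fun r => r (Fin.last (j+1)) = 0), f r = Dcat S (j+1) :=
    sum_filter_last (j+1) S
  have hPQ : ∑ r ∈ s.filter (fun r => r 0 = 0 ∧ r (Fin.last (j+1)) = 0), f r = Dcat S j :=
    sum_filter_both j S
  rw [hall, hP] at E3
  rw [hcomm1, hcomm2, hPQ, hQ] at E4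
  have key : ∑ r ∈ s.filter (fun r => ¬ (r 0 = 0) ∧ ¬ (r (Fin.last (j+1)) = 0)), f r
      + Dcat S (j+1) + Dcat S (j+1) = Dcat S (j+2) + Dcat S j := by linarith
  have key' := congrArg (fun x : ℕ => (x : ℤ)) key
  push_cast at key'
  rw [hT]
  push_cast
  linarith

/-- For every m ≥ 2, with ⌊m⌋ := ⌊(m−1)/2⌋ + 2, there exist positive integers
a₁, …, a_{⌊m⌋} such that for all n ≥ m,
T(n,m) = ∑_{l=1}^{⌊m⌋} (−1)^{l−1}·a_l·C_{n+2−l}.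
(Below the coordinate `l : Fin ⌊m⌋` is a_{l+1} of the paper, and C_{n+2−(l+1)} = C_{n+1−l}.) -/
theorem stmt_14 (m : ℕ) (hm : 2 ≤ m) :
    ∃ a : Fin ((m - 1) / 2 + 2) → ℤ, (∀ l, 0 < a l) ∧
      ∀ n : ℕ, m ≤ n →
        (Tcount n m : ℤ) =
          ∑ l : Fin ((m - 1) / 2 + 2), (-1 : ℤ) ^ (l : ℕ) * a l * catalan (n + 1 - (l : ℕ)) := by
  obtain ⟨j, rfl⟩ : ∃ j, m = j + 2 := ⟨m - 2, by omega⟩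
  refine ⟨fun l => ((j + 3 - (l : ℕ)).choose (l : ℕ) : ℤ), fun l => ?_, fun n hn => ?_⟩
  · have hl : (l : ℕ) < (j + 2 - 1) / 2 + 2 := l.isLt
    have hle : (l : ℕ) ≤ j + 3 - (l : ℕ) := by omega
    simp only []
    exact_mod_cast Nat.choose_pos hle
  · obtain ⟨s0, hs0⟩ : ∃ s0, n - (j + 2) = s0 := ⟨_, rfl⟩
    have h1 := Tcount_eq n j
    rw [hs0] at h1
    have R1 : Dcat (s0+2) (j+1) = Dcat (s0+2) j + Dcat (s0+1) (j+2) := Dcat_rec (s0+1) j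
    have R2 : Dcat (s0+2) (j+2) = Dcat (s0+2) (j+1) + Dcat (s0+1) (j+3) := Dcat_rec (s0+1) (j+1)
    have R4 : Dcat (s0+1) (j+3) = Dcat (s0+1) (j+2) + Dcat s0 (j+4) := Dcat_rec s0 (j+2)
    have h2 : (Tcount n (j+2) : ℤ) = (Dcat s0 (j+4) : ℤ) := by
      rw [h1]; omega
    have h3 : (Dcat s0 (j+4) : ℤ)
        = ∑ l ∈ range (j+4), (-1:ℤ)^l * ((j+3-l).choose l : ℤ) * (catalan (n+1-l) : ℤ) := by
      refine (Dcat_closed (j+2) s0).trans ?_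
      refine Finset.sum_congr rfl fun l hl => ?_
      simp only [Finset.mem_range] at hl
      have e1 : j+2+1-l = j+3-l := by omega
      have e2 : s0+(j+2)+1-l = n+1-l := by omega
      rw [e1, e2]
    have h4 : ∑ l ∈ range (j+4), (-1:ℤ)^l * ((j+3-l).choose l : ℤ) * (catalan (n+1-l) : ℤ)
        = ∑ l ∈ range ((j+1)/2+2), (-1:ℤ)^l * ((j+3-l).choose l : ℤ) * (catalan (n+1-l) : ℤ) := by
      refine (Finset.sum_subset (Finset.range_subset_range.mpr (by omega)) fun x hx hnx => ?_).symm
      simp only [Finset.mem_range] at hx hnx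
      have hz : (j+3-x).choose x = 0 := Nat.choose_eq_zero_of_lt (by omega)
      rw [hz]
      simp
    rw [h2, h3, h4, Finset.sum_range]
    exact Finset.sum_congr rfl fun l _ => rfl
end

section
/- For every m ≥ 2, setting ⌊m⌋ := ⌊(m−1)/2⌋ + 2, there exist real constants c_1, c_2 > 0 such that for all integers n ≥ m, c_1·C_{n−⌊m⌋+2} ≤ T(n,m) ≤ c_2·C_{n−⌊m⌋+2}, where T(n,m) denotes the sum ∑ C_{r_1}·…·C_{r_m} over all m-tuples (r_1,…,r_m) of nonnegative integers with r_1 ≥ 1, r_m ≥ 1 and r_1+⋯+r_m = n−m+2. -/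
open Finset

lemma catalan_pos (n : ℕ) : 0 < catalan n := by
  have h := succ_mul_catalan_eq_centralBinom n
  have hb := n.centralBinom_pos
  rcases Nat.eq_zero_or_pos (catalan n) with h0 | h0
  · rw [h0, Nat.mul_zero] at h; omega
  · exact h0

lemma cat_succ_le_four (n : ℕ) : catalan (n+1) ≤ 4 * catalan n := by
  have h1 := succ_mul_catalan_eq_centralBinom (n+1)
  have h2 := succ_mul_catalan_eq_centralBinom n
  have h3 := Nat.succ_mul_centralBinom_succ n
  have key : (n+1) * ((n+2) * catalan (n+1)) = (n+1) * ((4*n+2) * catalan n) := by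
    rw [h1]; nlinarith [h2, h3]
  have key2 : (n+2) * catalan (n+1) = (4*n+2) * catalan n :=
    Nat.eq_of_mul_eq_mul_left (by omega) key
  have : (n+2) * catalan (n+1) ≤ (n+2) * (4 * catalan n) := by
    rw [key2]; nlinarith [catalan_pos n]
  exact Nat.le_of_mul_le_mul_left this (by omega)

lemma cat_add_le (n j : ℕ) : catalan (n + j) ≤ 4^j * catalan n := by
  induction j with
  | zero => simp
  | succ j ih =>
    calc catalan (n + (j+1)) = catalan ((n+j)+1) := by ring_nf
    _ ≤ 4 * catalan (n+j) := cat_succ_le_four _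
    _ ≤ 4 * (4^j * catalan n) := by exact Nat.mul_le_mul_left _ ih
    _ = 4^(j+1) * catalan n := by ring

lemma cat_mono : Monotone catalan := by
  apply monotone_nat_of_le_succ
  intro n
  rw [catalan_succ]
  calc catalan n = catalan n * catalan (n - n) := by simp
  _ ≤ _ := Finset.single_le_sum (f := fun i : Fin n.succ => catalan i * catalan (n - i))
      (fun i _ => Nat.zero_le _) (Finset.mem_univ (Fin.last n))

lemma sum_tuple_succ (f : ℕ → ℕ) (k n : ℕ) :
    ∑ r ∈ Finset.Nat.antidiagonalTuple (k+1) n, ∏ i, f (r i)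
      = ∑ p ∈ Finset.HasAntidiagonal.antidiagonal n, f p.1 *
          ∑ r ∈ Finset.Nat.antidiagonalTuple k p.2, ∏ i, f (r i) := by
  simp_rw [Finset.mul_sum]
  rw [Finset.sum_sigma']
  refine Finset.sum_nbij'
    (fun r => (⟨(r 0, ∑ i, Fin.tail r i), Fin.tail r⟩ : Σ _p : ℕ × ℕ, Fin k → ℕ))
    (fun x => Fin.cons x.1.1 x.2) ?_ ?_ ?_ ?_ ?_
  · intro r h
    rw [Finset.Nat.mem_antidiagonalTuple, Fin.sum_univ_succ] at h
    simp only [Finset.mem_sigma, Finset.HasAntidiagonal.mem_antidiagonal,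
      Finset.Nat.mem_antidiagonalTuple]
    exact ⟨h, trivial⟩
  · rintro ⟨⟨a, b⟩, r⟩ h
    simp only [Finset.mem_sigma, Finset.HasAntidiagonal.mem_antidiagonal,
      Finset.Nat.mem_antidiagonalTuple] at h
    rw [Finset.Nat.mem_antidiagonalTuple, Fin.sum_univ_succ]
    simp only [Fin.cons_zero, Fin.cons_succ]
    rw [h.2]
    exact h.1
  · intro r h
    simp [Fin.cons_self_tail]
  · rintro ⟨⟨a, b⟩, r⟩ h
    simp only [Finset.mem_sigma, Finset.HasAntidiagonal.mem_antidiagonal,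
      Finset.Nat.mem_antidiagonalTuple] at h
    simp only [Fin.cons_zero, Fin.tail_cons]
    rw [h.2]
  · intro r h
    rw [Fin.prod_univ_succ]
    rfl

lemma conv_aux (m N : ℕ) :
    ∑ p ∈ Finset.HasAntidiagonal.antidiagonal N, catalan p.1 * catalan (p.2 + m) ≤ catalan (N + m + 1) := by
  have himg : ∑ p ∈ Finset.HasAntidiagonal.antidiagonal N, catalan p.1 * catalan (p.2 + m)
      = ∑ q ∈ (Finset.HasAntidiagonal.antidiagonal N).image (fun p : ℕ × ℕ => (p.1, p.2 + m)),
          catalan q.1 * catalan q.2 := by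
    rw [Finset.sum_image]
    rintro ⟨a1, a2⟩ _ ⟨b1, b2⟩ _ h
    simp only [Prod.mk.injEq] at h
    obtain ⟨h1, h2⟩ := h
    simp only [Prod.mk.injEq]
    omega
  rw [himg]
  have hsub : (Finset.HasAntidiagonal.antidiagonal N).image (fun p : ℕ × ℕ => (p.1, p.2 + m))
      ⊆ Finset.HasAntidiagonal.antidiagonal (N + m) := by
    rintro ⟨q1, q2⟩ hq
    simp only [Finset.mem_image, Finset.HasAntidiagonal.mem_antidiagonal, Prod.mk.injEq] at hq ⊢
    obtain ⟨⟨p1, p2⟩, hp, h1, h2⟩ := hq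
    omega
  calc _ ≤ ∑ q ∈ Finset.HasAntidiagonal.antidiagonal (N + m), catalan q.1 * catalan q.2 :=
        Finset.sum_le_sum_of_subset hsub
  _ = catalan (N + m + 1) := (catalan_succ' (N + m)).symm

lemma conv_le (m N : ℕ) :
    ∑ r ∈ Finset.Nat.antidiagonalTuple (m+1) N, ∏ i, catalan (r i) ≤ catalan (N + m) := by
  induction m generalizing N with
  | zero =>
    rw [Finset.Nat.antidiagonalTuple_one, Finset.sum_singleton]
    simp
  | succ m ih =>
    rw [sum_tuple_succ]
    have step1 : ∑ p ∈ Finset.HasAntidiagonal.antidiagonal N, catalan p.1 *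
        ∑ r ∈ Finset.Nat.antidiagonalTuple (m+1) p.2, ∏ i, catalan (r i)
        ≤ ∑ p ∈ Finset.HasAntidiagonal.antidiagonal N, catalan p.1 * catalan (p.2 + m) := by
      apply Finset.sum_le_sum
      intro p _
      exact Nat.mul_le_mul_left _ (ih p.2)
    exact step1.trans (conv_aux m N)

lemma Tcount_upper (n m : ℕ) (hm : 1 ≤ m) :
    Tcount n m ≤ catalan (n - m + 2 + (m - 1)) := by
  obtain ⟨m', rfl⟩ : ∃ m', m = m' + 1 := ⟨m - 1, by omega⟩
  calc Tcount n (m' + 1)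
      ≤ ∑ r ∈ Finset.Nat.antidiagonalTuple (m'+1) (n - (m'+1) + 2), ∏ i, catalan (r i) :=
        Finset.sum_le_sum_of_subset (Finset.filter_subset _ _)
  _ ≤ catalan (n - (m'+1) + 2 + m') := conv_le _ _
  _ = catalan (n - (m'+1) + 2 + (m' + 1 - 1)) := by simp

lemma Tcount_lower (n m : ℕ) (hm : 2 ≤ m) (hn : m ≤ n) :
    catalan (n - m + 2 - 1) ≤ Tcount n m := by
  set N := n - m + 2 with hN
  have hN2 : 2 ≤ N := by omega
  have hab : (⟨0, by omega⟩ : Fin m) ≠ ⟨m - 1, by omega⟩ := by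
    intro h
    have := congrArg Fin.val h
    simp at this
    omega
  set a : Fin m := ⟨0, by omega⟩ with ha
  set b : Fin m := ⟨m - 1, by omega⟩ with hb
  set r0 : Fin m → ℕ :=
    fun i => (if i = a then 1 else 0) + (if i = b then N - 1 else 0) with hr0
  have hsum : ∑ i, r0 i = N := by
    rw [hr0]
    rw [Finset.sum_add_distrib, Finset.sum_ite_eq' Finset.univ a (fun _ => 1),
      Finset.sum_ite_eq' Finset.univ b (fun _ => N - 1)]
    simp only [Finset.mem_univ, if_true]
    omega
  have hmem : r0 ∈ (Finset.Nat.antidiagonalTuple m N).filter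
      (fun r => ∀ i : Fin m, ((i : ℕ) = 0 ∨ (i : ℕ) = m - 1) → 1 ≤ r i) := by
    rw [Finset.mem_filter]
    refine ⟨Finset.Nat.mem_antidiagonalTuple.mpr hsum, ?_⟩
    intro i hi
    have hia : i = a ∨ i = b := by
      rcases hi with h | h
      · left; exact Fin.ext h
      · right; exact Fin.ext h
    rcases hia with rfl | rfl
    · simp [hr0, hab]
    · simp [hr0, hab.symm]; omega
  have hprod : catalan (N - 1) ≤ ∏ i, catalan (r0 i) := by
    have hb0 : r0 b = N - 1 := by simp [hr0, hab.symm]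
    calc catalan (N - 1) = catalan (r0 b) := by rw [hb0]
    _ ≤ ∏ i, catalan (r0 i) :=
        Finset.single_le_prod' (f := fun i => catalan (r0 i)) (fun i _ => catalan_pos (r0 i)) (Finset.mem_univ b)
  refine hprod.trans ?_
  rw [Tcount, ← hN]
  exact Finset.single_le_sum (f := fun r : Fin m → ℕ => ∏ i, catalan (r i))
    (fun r _ => Nat.zero_le _) hmem

/-- For every m ≥ 2, with ⌊m⌋ := ⌊(m−1)/2⌋ + 2, there are constants
c₁, c₂ > 0 with c₁·C_{n−⌊m⌋+2} ≤ T(n,m) ≤ c₂·C_{n−⌊m⌋+2} for all n ≥ m. -/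
theorem stmt_16 (m : ℕ) (hm : 2 ≤ m) :
    ∃ c₁ c₂ : ℝ, 0 < c₁ ∧ 0 < c₂ ∧ ∀ n : ℕ, m ≤ n →
      c₁ * (catalan (n - ((m - 1) / 2 + 2) + 2) : ℝ) ≤ (Tcount n m : ℝ) ∧
        (Tcount n m : ℝ) ≤ c₂ * (catalan (n - ((m - 1) / 2 + 2) + 2) : ℝ) := by
  refine ⟨((4:ℝ)^m)⁻¹, (4:ℝ)^m, by positivity, by positivity, fun n hn => ?_⟩
  set K := n - ((m - 1) / 2 + 2) + 2 with hK
  set N := n - m + 2 with hN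
  have hk1 : K ≤ (N - 1) + m := by omega
  have hk2 : N + (m - 1) ≤ K + m := by omega
  have hnat1 : catalan K ≤ 4^m * Tcount n m := by
    calc catalan K ≤ catalan ((N - 1) + m) := cat_mono hk1
    _ ≤ 4^m * catalan (N - 1) := cat_add_le _ _
    _ ≤ 4^m * Tcount n m := Nat.mul_le_mul_left _ (Tcount_lower n m hm hn)
  have hnat2 : Tcount n m ≤ 4^m * catalan K := by
    calc Tcount n m ≤ catalan (N + (m - 1)) := Tcount_upper n m (by omega)
    _ ≤ catalan (K + m) := cat_mono hk2
    _ ≤ 4^m * catalan K := cat_add_le K m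
  constructor
  · rw [inv_mul_le_iff₀ (by positivity)]
    have := (Nat.cast_le (α := ℝ)).mpr hnat1
    push_cast at this ⊢
    linarith
  · have := (Nat.cast_le (α := ℝ)).mpr hnat2
    push_cast at this ⊢
    linarith
end
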